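/- Optimality of prefix sets in sorted instances: suppose b₁ ≤ b₂ ≤ … ≤ b_q and all fixed costs fᵢ = f are equal. Then there is an optimal solution of P whose set of selected discs is a prefix {1,…,k} for some k. -/

import Mathlib

open Finset

lemma sum_subset_le_sum_prefix (q : ℕ) (c : ℕ → ℝ)
    (hmono : ∀ i j, 1 ≤ i → i ≤ j → j ≤ q → c j ≤ c i) :
    ∀ (n : ℕ) (S : Finset ℕ), S ⊆ Finset.Icc 1 q → S.card = n →
      ∑ i ∈ S, c i ≤ ∑ i ∈ Finset.Icc 1 n, c i := by
  intro n
  induction n with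
  | zero =>
    intro S hS hcard
    rw [Finset.card_eq_zero.mp hcard]
    simp
  | succ n ih =>
    intro S hS hcard
    have hne : S.Nonempty := Finset.card_pos.mp (by omega)
    set m := S.max' hne with hm
    have hmmem : m ∈ S := S.max'_mem hne
    have hmIcc := hS hmmem
    have hm1 : 1 ≤ m := (Finset.mem_Icc.mp hmIcc).1
    have hmq : m ≤ q := (Finset.mem_Icc.mp hmIcc).2
    have hSsub : S ⊆ Finset.Icc 1 m := by
      intro a ha
      exact Finset.mem_Icc.mpr ⟨(Finset.mem_Icc.mp (hS ha)).1, S.le_max' a ha⟩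
    have hcardle : n + 1 ≤ m := by
      have := Finset.card_le_card hSsub
      simpa [hcard, Nat.card_Icc] using this
    have herase : (S.erase m).card = n := by
      rw [Finset.card_erase_of_mem hmmem, hcard]; omega
    have hsub' : S.erase m ⊆ Finset.Icc 1 q := (Finset.erase_subset m S).trans hS
    have hIH := ih (S.erase m) hsub' herase
    have hsplit : ∑ i ∈ S, c i = c m + ∑ i ∈ S.erase m, c i :=
      (Finset.add_sum_erase S c hmmem).symm
    have hrhs : ∑ i ∈ Finset.Icc 1 (n+1), c i
        = ∑ i ∈ Finset.Icc 1 n, c i + c (n+1) := by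
      rw [← Finset.sum_Icc_succ_top (by omega : 1 ≤ n + 1)]
    have hcm : c m ≤ c (n+1) := hmono (n+1) m (by omega) hcardle hmq
    rw [hsplit, hrhs]
    linarith

theorem prefix_set_optimal
    (q : ℕ) (hq : 1 ≤ q) (b : ℕ → ℝ) (f : ℝ) (hf : 0 ≤ f)
    (hb : ∀ i ∈ Finset.Icc 1 q, 0 < b i)
    (hbmono : ∀ i j, 1 ≤ i → i ≤ j → j ≤ q → b i ≤ b j) :
    ∃ (x y : ℕ → ℝ) (k : ℕ),
      (∀ i ∈ Finset.Icc 1 q, 0 ≤ x i ∧ x i ≤ y i ∧ (y i = 0 ∨ y i = 1)) ∧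
      (∑ i ∈ Finset.Icc 1 q, x i = 1) ∧
      (∀ x' y' : ℕ → ℝ,
        (∀ i ∈ Finset.Icc 1 q, 0 ≤ x' i ∧ x' i ≤ y' i ∧ (y' i = 0 ∨ y' i = 1)) →
        (∑ i ∈ Finset.Icc 1 q, x' i = 1) →
        ∑ i ∈ Finset.Icc 1 q, (f * y i + b i * (x i) ^ 2) ≤
          ∑ i ∈ Finset.Icc 1 q, (f * y' i + b i * (x' i) ^ 2)) ∧
      k ≤ q ∧ (∀ i ∈ Finset.Icc 1 q, y i = 1 ↔ i ≤ k) := by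
  classical
  -- H k = sum of reciprocals of b over the prefix of length k
  set H : ℕ → ℝ := fun k => ∑ i ∈ Finset.Icc 1 k, (b i)⁻¹ with hH
  have Hpos : ∀ k, 1 ≤ k → k ≤ q → 0 < H k := by
    intro k hk1 hkq
    apply Finset.sum_pos
    · intro i hi
      have hi' : i ∈ Finset.Icc 1 q := by
        rw [Finset.mem_Icc] at hi ⊢; omega
      exact inv_pos.mpr (hb i hi')
    · exact ⟨1, Finset.mem_Icc.mpr ⟨le_refl 1, hk1⟩⟩
  set g : ℕ → ℝ := fun k => f * k + (H k)⁻¹ with hg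
  -- choose k minimizing g over Icc 1 q
  obtain ⟨k, hkmem, hkmin⟩ := (Finset.Icc 1 q).exists_min_image g
    ⟨1, Finset.mem_Icc.mpr ⟨le_refl 1, hq⟩⟩
  have hk1 : 1 ≤ k := (Finset.mem_Icc.mp hkmem).1
  have hkq : k ≤ q := (Finset.mem_Icc.mp hkmem).2
  have hHk : 0 < H k := Hpos k hk1 hkq
  set x : ℕ → ℝ := fun i => if i ∈ Finset.Icc 1 k then (b i)⁻¹ * (H k)⁻¹ else 0 with hx
  set y : ℕ → ℝ := fun i => if i ≤ k then 1 else 0 with hy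
  have hsubq : Finset.Icc 1 k ⊆ Finset.Icc 1 q := by
    intro a ha; rw [Finset.mem_Icc] at ha ⊢; omega
  have hbpos : ∀ i ∈ Finset.Icc 1 k, 0 < b i := fun i hi => hb i (hsubq hi)
  -- feasibility
  have hfeas : ∀ i ∈ Finset.Icc 1 q, 0 ≤ x i ∧ x i ≤ y i ∧ (y i = 0 ∨ y i = 1) := by
    intro i hi
    by_cases hik : i ∈ Finset.Icc 1 k
    · have hbi := hbpos i hik
      have h1 : 0 ≤ x i := by
        simp only [hx, if_pos hik]
        positivity
      have hterm : (b i)⁻¹ ≤ H k :=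
        Finset.single_le_sum (f := fun j => (b j)⁻¹)
          (fun j hj => le_of_lt (inv_pos.mpr (hbpos j hj))) hik
      have h2 : x i ≤ y i := by
        have hik' : i ≤ k := (Finset.mem_Icc.mp hik).2
        simp only [hx, hy, if_pos hik, if_pos hik']
        rw [← div_eq_mul_inv, div_le_one hHk]
        exact hterm
      refine ⟨h1, h2, ?_⟩
      simp [hy, (Finset.mem_Icc.mp hik).2]
    · have hik' : ¬ i ≤ k := by
        rw [Finset.mem_Icc] at hi hik; omega
      simp only [hx, hy, if_neg hik, if_neg hik']
      norm_num
  -- sum of x is 1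
  have hsumx : ∑ i ∈ Finset.Icc 1 q, x i = 1 := by
    rw [← Finset.sum_subset hsubq (by
      intro i _ hik
      simp only [hx, if_neg hik])]
    have : ∑ i ∈ Finset.Icc 1 k, x i = (∑ i ∈ Finset.Icc 1 k, (b i)⁻¹) * (H k)⁻¹ := by
      rw [Finset.sum_mul]
      exact Finset.sum_congr rfl (fun i hi => by simp only [hx, if_pos hi])
    rw [this]
    exact mul_inv_cancel₀ (ne_of_gt hHk)
  -- cost of (x, y) equals g k
  have hcost : ∑ i ∈ Finset.Icc 1 q, (f * y i + b i * (x i) ^ 2) = g k := by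
    rw [← Finset.sum_subset hsubq (by
      intro i hi hik
      have hik' : ¬ i ≤ k := by rw [Finset.mem_Icc] at hi hik; omega
      simp only [hx, hy, if_neg hik, if_neg hik']
      norm_num)]
    have hterm : ∀ i ∈ Finset.Icc 1 k,
        f * y i + b i * (x i) ^ 2 = f + (b i)⁻¹ * ((H k)⁻¹)^2 := by
      intro i hi
      have hik' : i ≤ k := (Finset.mem_Icc.mp hi).2
      have hbi := ne_of_gt (hbpos i hi)
      simp only [hx, hy, if_pos hi, if_pos hik', mul_one]
      rw [mul_pow]
      field_simp
    rw [Finset.sum_congr rfl hterm, Finset.sum_add_distrib, Finset.sum_const,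
      ← Finset.sum_mul, nsmul_eq_mul]
    have hc : ((Finset.Icc 1 k).card : ℝ) = (k : ℝ) := by
      simp [Nat.card_Icc]
    have hHdef : (∑ i ∈ Finset.Icc 1 k, (b i)⁻¹) = H k := rfl
    rw [hc, hHdef]
    simp only [hg]
    field_simp
  refine ⟨x, y, k, hfeas, hsumx, ?_, hkq, ?_⟩
  · -- optimality
    intro x' y' hfeas' hsum'
    rw [hcost]
    set S : Finset ℕ := (Finset.Icc 1 q).filter (fun i => y' i = 1) with hS
    have hSsub : S ⊆ Finset.Icc 1 q := Finset.filter_subset _ _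
    -- x' vanishes outside S
    have hx'zero : ∀ i ∈ Finset.Icc 1 q, i ∉ S → x' i = 0 := by
      intro i hi hiS
      obtain ⟨h0, h1, h2⟩ := hfeas' i hi
      rcases h2 with h2 | h2
      · linarith
      · exact absurd (Finset.mem_filter.mpr ⟨hi, h2⟩) hiS
    have hsumS : ∑ i ∈ S, x' i = 1 := by
      rw [Finset.sum_subset hSsub (fun i hi hiS => hx'zero i hi hiS)]
      exact hsum'
    have hSne : S.Nonempty := by
      by_contra h
      rw [Finset.not_nonempty_iff_eq_empty] at h
      rw [h] at hsumS
      simp at hsumS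
    set k' : ℕ := S.card with hk'
    have hk'1 : 1 ≤ k' := Finset.card_pos.mpr hSne
    have hk'q : k' ≤ q := by
      have := Finset.card_le_card hSsub
      simpa [Nat.card_Icc] using this
    have hHk' : 0 < H k' := Hpos k' hk'1 hk'q
    set A : ℝ := ∑ i ∈ S, (b i)⁻¹ with hA
    have hApos : 0 < A := Finset.sum_pos
      (fun i hi => inv_pos.mpr (hb i (hSsub hi))) hSne
    have hAle : A ≤ H k' := by
      apply sum_subset_le_sum_prefix q (fun i => (b i)⁻¹)
        (fun i j h1 h2 h3 => by
          have := hbmono i j h1 h2 h3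
          have hbi := hb i (Finset.mem_Icc.mpr ⟨h1, le_trans h2 h3⟩)
          exact inv_anti₀ hbi this)
        k' S hSsub rfl
    -- Cauchy-Schwarz
    have hcauchy : 1 ≤ (∑ i ∈ S, b i * (x' i)^2) * A := by
      have := Finset.sum_mul_sq_le_sq_mul_sq S
        (fun i => Real.sqrt (b i) * x' i) (fun i => (Real.sqrt (b i))⁻¹)
      have hlhs : ∑ i ∈ S, (Real.sqrt (b i) * x' i) * (Real.sqrt (b i))⁻¹
          = ∑ i ∈ S, x' i := by
        apply Finset.sum_congr rfl
        intro i hi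
        have hbi := hb i (hSsub hi)
        have hs : Real.sqrt (b i) ≠ 0 := ne_of_gt (Real.sqrt_pos.mpr hbi)
        field_simp
      have hf2 : ∑ i ∈ S, (Real.sqrt (b i) * x' i)^2 = ∑ i ∈ S, b i * (x' i)^2 := by
        apply Finset.sum_congr rfl
        intro i hi
        have hbi := hb i (hSsub hi)
        rw [mul_pow, Real.sq_sqrt (le_of_lt hbi)]
      have hg2 : ∑ i ∈ S, ((Real.sqrt (b i))⁻¹)^2 = A := by
        apply Finset.sum_congr rfl
        intro i hi
        have hbi := hb i (hSsub hi)
        rw [inv_pow, Real.sq_sqrt (le_of_lt hbi)]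
      rw [hlhs, hf2, hg2, hsumS] at this
      simpa using this
    have hBpos : 0 ≤ ∑ i ∈ S, b i * (x' i)^2 := Finset.sum_nonneg
      (fun i hi => by
        have := hb i (hSsub hi)
        positivity)
    have hB : (H k')⁻¹ ≤ ∑ i ∈ S, b i * (x' i)^2 := by
      have h1 : A⁻¹ ≤ ∑ i ∈ S, b i * (x' i)^2 := by
        rw [inv_eq_one_div, div_le_iff₀ hApos]
        exact hcauchy
      have h2 : (H k')⁻¹ ≤ A⁻¹ := inv_anti₀ hApos hAle
      linarith
    -- lower bound fixed-cost part
    have hy'part : f * (k' : ℝ) ≤ ∑ i ∈ Finset.Icc 1 q, f * y' i := by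
      rw [← Finset.mul_sum]
      apply mul_le_mul_of_nonneg_left _ hf
      have h1 : (k' : ℝ) = ∑ i ∈ S, y' i := by
        rw [hk']
        rw [Finset.sum_congr rfl (fun i hi => (Finset.mem_filter.mp hi).2)]
        simp
        rfl
      rw [h1]
      apply Finset.sum_le_sum_of_subset_of_nonneg hSsub
      intro i hi _
      rcases (hfeas' i hi).2.2 with h | h <;> simp [h]
    have hx'part : ∑ i ∈ S, b i * (x' i)^2 ≤ ∑ i ∈ Finset.Icc 1 q, b i * (x' i)^2 := by
      apply Finset.sum_le_sum_of_subset_of_nonneg hSsub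
      intro i hi _
      have := hb i hi
      positivity
    have hgk' : g k ≤ g k' := hkmin k' (Finset.mem_Icc.mpr ⟨hk'1, hk'q⟩)
    have hrhs : ∑ i ∈ Finset.Icc 1 q, (f * y' i + b i * (x' i) ^ 2)
        = ∑ i ∈ Finset.Icc 1 q, f * y' i + ∑ i ∈ Finset.Icc 1 q, b i * (x' i)^2 :=
      Finset.sum_add_distrib
    rw [hrhs]
    have hgk'eq : g k' = f * (k' : ℝ) + (H k')⁻¹ := rfl
    calc g k ≤ g k' := hgk'
      _ = f * (k' : ℝ) + (H k')⁻¹ := hgk'eq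
      _ ≤ (∑ i ∈ Finset.Icc 1 q, f * y' i) + ∑ i ∈ S, b i * (x' i)^2 :=
          add_le_add hy'part hB
      _ ≤ (∑ i ∈ Finset.Icc 1 q, f * y' i) + ∑ i ∈ Finset.Icc 1 q, b i * (x' i)^2 := by
          linarith [hx'part]
  · -- prefix property
    intro i _
    constructor
    · intro h
      by_contra hik
      simp [hy, hik] at h
    · intro h
      simp [hy, h]
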